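/- Let 𝓐 = 𝓐₀ ∪ ⋯ ∪ 𝓐_{k−1} be a family of sets (k a positive natural number) such that ⋃𝓐 is the union of a chain 𝓓 of sets, where each member of 𝓓 is the union of some nonempty chain of members of 𝓐. Then there exists j < k such that ⋃𝓐 = ⋃𝓐ⱼ. -/

import Mathlib

open Set

/-- In a chain of sets, for any function into a finite type, some fiber is cofinal. -/
lemma cofinal_fiber {X : Type*} {k : ℕ} (hk : 0 < k) (C : Set (Set X))
    (hC : IsChain (· ⊆ ·) C) (f : Set X → Fin k) :
    ∃ j : Fin k, ∀ c ∈ C, ∃ d ∈ C, c ⊆ d ∧ f d = j := by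
  haveI : Nonempty (Fin k) := Fin.pos_iff_nonempty.mp hk
  by_contra h
  push_neg at h
  choose g hgC hg using h
  obtain ⟨m, hmS, hmax⟩ :=
    (Set.finite_range g).exists_maximalFor id _ (Set.range_nonempty g)
  obtain ⟨j₀, rfl⟩ := hmS
  have hall : ∀ j, g j ⊆ g j₀ := by
    intro j
    rcases eq_or_ne (g j) (g j₀) with he | hne
    · exact he.le
    rcases hC (hgC j) (hgC j₀) hne with h1 | h1
    · exact h1
    · exact hmax (j := g j) ⟨j, rfl⟩ h1
  exact hg (f (g j₀)) (g j₀) (hgC j₀) (hall (f (g j₀))) rfl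

/-- Lemma 4.4: if `𝓐 = 𝓐₀ ∪ ⋯ ∪ 𝓐_{k-1}` and `⋃𝓐` is the union of a chain `𝓓` of sets,
each of which is the union of a nonempty chain of members of `𝓐`, then `⋃𝓐 = ⋃𝓐ⱼ` for
some `j < k`. -/
theorem union_eq_union_of_piece {X : Type*} (k : ℕ) (hk : 0 < k)
    (A : Fin k → Set (Set X)) (D : Set (Set X)) (hDne : D.Nonempty)
    (hDchain : IsChain (· ⊆ ·) D)
    (hDunion : ⋃₀ (⋃ j, A j) = ⋃₀ D)
    (hD : ∀ M ∈ D, ∃ C : Set (Set X), C ⊆ (⋃ j, A j) ∧ C.Nonempty ∧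
      IsChain (· ⊆ ·) C ∧ M = ⋃₀ C) :
    ∃ j : Fin k, ⋃₀ (⋃ i, A i) = ⋃₀ (A j) := by
  classical
  -- a choice function assigning to each set one of the pieces containing it
  set f : Set X → Fin k := fun c =>
    if hc : ∃ j, c ∈ A j then hc.choose else ⟨0, hk⟩ with hf
  have hfmem : ∀ c, c ∈ ⋃ j, A j → c ∈ A (f c) := by
    intro c hc
    rw [Set.mem_iUnion] at hc
    simp only [hf, dif_pos hc]
    exact hc.choose_spec
  -- Step 1: each M ∈ D is contained in ⋃₀ (A j) for some j
  have step1 : ∀ M ∈ D, ∃ j, M ⊆ ⋃₀ (A j) := by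
    intro M hM
    obtain ⟨C, hCsub, hCne, hCchain, rfl⟩ := hD M hM
    obtain ⟨j, hj⟩ := cofinal_fiber hk C hCchain f
    refine ⟨j, ?_⟩
    rintro x ⟨c, hcC, hxc⟩
    obtain ⟨d, hdC, hcd, hfd⟩ := hj c hcC
    exact ⟨d, hfd ▸ hfmem d (hCsub hdC), hcd hxc⟩
  -- a choice function assigning to each M ∈ D such a piece
  set g : Set X → Fin k := fun M =>
    if hM : M ∈ D then (step1 M hM).choose else ⟨0, hk⟩ with hg
  have hgmem : ∀ M (hM : M ∈ D), M ⊆ ⋃₀ (A (g M)) := by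
    intro M hM
    simp only [hg, dif_pos hM]
    exact (step1 M hM).choose_spec
  -- Step 2: some fiber of g is cofinal in D
  obtain ⟨j, hj⟩ := cofinal_fiber hk D hDchain g
  refine ⟨j, Set.Subset.antisymm ?_ ?_⟩
  · rw [hDunion]
    rintro x ⟨M, hMD, hxM⟩
    obtain ⟨M', hM'D, hMM', hgM'⟩ := hj M hMD
    exact hgM' ▸ hgmem M' hM'D (hMM' hxM)
  · exact Set.sUnion_mono (Set.subset_iUnion A j)
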